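/- Let N ≥ 1 and δ > 0. Let Q_1,…,Q_N, Q̄_1,…,Q̄_N be positive reals and E_1,…,E_{N−1}, Ē_1,…,Ē_{N−1} be positive reals, with conventions E_0 = Ē_0 := 0, satisfying Q̄_i + Ē_{i−1} − δ = Q_i + E_{i−1} for i = 1,…,N and Q̄_i Ē_i = Q_i E_i for i = 1,…,N−1. Define p_i := (Q̄_i/Q_i − 1)/δ for i = 1,…,N and assume each p_i > 0; let x_1,…,x_N be reals satisfying e^{x_{i+1}−x_i} = p_i E_i/(p_{i+1} Q_{i+1}) for i = 1,…,N−1. Define the N×N upper bidiagonal matrix R with diagonal entries √(Q_i) and superdiagonal entries R_{i,i+1} = −√(E_i), and R̄ analogously from Q̄, Ē. Then the matrix R̄ R^{−1} is upper triangular with diagonal entries (R̄R^{−1})_{ii} = √(1 + δ p_i) and, for j > i, entries (R̄R^{−1})_{ij} = (δ p_i/√(1 + δ p_i))·√(p_j e^{x_j}/(p_i e^{x_i})). -/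

import Mathlib

open Matrix

/-- The upper bidiagonal matrix R with diagonal √(Q_i) and superdiagonal R_{i,i+1} = −√(E_i)
(1-based data Q, E). -/
noncomputable def bidiagR (N : ℕ) (Q E : ℕ → ℝ) : Matrix (Fin N) (Fin N) ℝ :=
  Matrix.of fun i j =>
    if i.1 = j.1 then Real.sqrt (Q (i.1 + 1))
    else if j.1 = i.1 + 1 then -Real.sqrt (E (i.1 + 1))
    else 0

/-- p_i := (Q̄_i/Q_i − 1)/δ. -/
noncomputable def pVar (δ : ℝ) (Q Qb : ℕ → ℝ) (i : ℕ) : ℝ :=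
  (Qb i / Q i - 1) / δ

/-- The claimed upper-triangular matrix T = R̄ R⁻¹. -/
noncomputable def Tmat (N : ℕ) (δ : ℝ) (Q Qb x : ℕ → ℝ) : Matrix (Fin N) (Fin N) ℝ :=
  Matrix.of fun i j =>
    if i.1 = j.1 then Real.sqrt (1 + δ * pVar δ Q Qb (i.1 + 1))
    else if i.1 < j.1 then
      δ * pVar δ Q Qb (i.1 + 1) / Real.sqrt (1 + δ * pVar δ Q Qb (i.1 + 1)) *
        Real.sqrt (pVar δ Q Qb (j.1 + 1) * Real.exp (x (j.1 + 1)) /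
          (pVar δ Q Qb (i.1 + 1) * Real.exp (x (i.1 + 1))))
    else 0

lemma sum_mul_bidiag (N : ℕ) (Q E : ℕ → ℝ) (f : Fin N → ℝ) (j : Fin N) :
    ∑ k, f k * bidiagR N Q E k j =
      f j * Real.sqrt (Q (j.1 + 1)) +
      (if 0 < j.1 then
        f ⟨j.1 - 1, lt_of_le_of_lt (Nat.pred_le _) j.2⟩ * (-Real.sqrt (E j.1)) else 0) := by
  classical
  rw [← Finset.add_sum_erase _ _ (Finset.mem_univ j)]
  congr 1
  · simp [bidiagR]
  · by_cases h : 0 < j.1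
    · rw [if_pos h]
      set j' : Fin N := ⟨j.1 - 1, lt_of_le_of_lt (Nat.pred_le _) j.2⟩ with hj'
      have hne : j' ≠ j := by
        intro hh
        have : j.1 - 1 = j.1 := congrArg Fin.val hh
        omega
      rw [Finset.sum_eq_single_of_mem j' (by simp [hne])]
      · have h1 : j'.1 ≠ j.1 := by simp only [hj']; omega
        have h2 : j.1 = j'.1 + 1 := by simp only [hj']; omega
        have hval : bidiagR N Q E j' j = -Real.sqrt (E j.1) := by
          simp only [bidiagR, Matrix.of_apply]
          rw [if_neg h1, if_pos h2, ← h2]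
        rw [hval]
      · intro k hk hkj
        have hkj2 : k ≠ j := (Finset.mem_erase.mp hk).1
        have h1 : k.1 ≠ j.1 := Fin.val_ne_of_ne hkj2
        have h2 : j.1 ≠ k.1 + 1 := by
          intro hh
          apply hkj
          apply Fin.ext
          simp [hj']; omega
        simp [bidiagR, h1, h2]
    · rw [if_neg h]
      apply Finset.sum_eq_zero
      intro k hk
      have hkj : k ≠ j := (Finset.mem_erase.mp hk).1
      have h1 : k.1 ≠ j.1 := Fin.val_ne_of_ne hkj
      have h2 : j.1 ≠ k.1 + 1 := by omega
      simp [bidiagR, h1, h2]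

theorem stmt12 (N : ℕ) (hN : 1 ≤ N) (δ : ℝ) (hδ : 0 < δ)
    (Q Qb E Eb : ℕ → ℝ)
    (hQ : ∀ i, 1 ≤ i → i ≤ N → 0 < Q i)
    (hQb : ∀ i, 1 ≤ i → i ≤ N → 0 < Qb i)
    (hE : ∀ i, 1 ≤ i → i ≤ N - 1 → 0 < E i)
    (hEb : ∀ i, 1 ≤ i → i ≤ N - 1 → 0 < Eb i)
    (hE0 : E 0 = 0) (hEb0 : Eb 0 = 0)
    (h1 : ∀ i, 1 ≤ i → i ≤ N → Qb i + Eb (i - 1) - δ = Q i + E (i - 1))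
    (h2 : ∀ i, 1 ≤ i → i ≤ N - 1 → Qb i * Eb i = Q i * E i)
    (hp : ∀ i, 1 ≤ i → i ≤ N → 0 < pVar δ Q Qb i)
    (x : ℕ → ℝ)
    (hx : ∀ i, 1 ≤ i → i ≤ N - 1 →
      Real.exp (x (i + 1) - x i)
        = pVar δ Q Qb i * E i / (pVar δ Q Qb (i + 1) * Q (i + 1))) :
    (∀ i j : Fin N, j < i → (bidiagR N Qb Eb * (bidiagR N Q E)⁻¹) i j = 0) ∧
    (∀ i : Fin N, (bidiagR N Qb Eb * (bidiagR N Q E)⁻¹) i i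
        = Real.sqrt (1 + δ * pVar δ Q Qb (i.1 + 1))) ∧
    (∀ i j : Fin N, i < j → (bidiagR N Qb Eb * (bidiagR N Q E)⁻¹) i j
        = δ * pVar δ Q Qb (i.1 + 1) / Real.sqrt (1 + δ * pVar δ Q Qb (i.1 + 1)) *
          Real.sqrt (pVar δ Q Qb (j.1 + 1) * Real.exp (x (j.1 + 1)) /
            (pVar δ Q Qb (i.1 + 1) * Real.exp (x (i.1 + 1))))) := by
  classical
  set p := pVar δ Q Qb with hpdef
  -- basic facts
  have hop : ∀ i, 1 ≤ i → i ≤ N → 0 < 1 + δ * p i := fun i h1i h2i => by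
    have := hp i h1i h2i
    positivity
  have hQbQ : ∀ i, 1 ≤ i → i ≤ N → Qb i = Q i * (1 + δ * p i) := by
    intro i h1i h2i
    have hQi := (hQ i h1i h2i).ne'
    have : δ * p i = Qb i / Q i - 1 := by
      rw [hpdef]; unfold pVar; field_simp
    rw [this]; field_simp; ring
  -- ratio fact: r (j+1) = r j * (E j / Q (j+1)) where r j = p j * exp (x j)
  have hr : ∀ j, 1 ≤ j → j ≤ N - 1 →
      p (j + 1) * Real.exp (x (j + 1)) = p j * Real.exp (x j) * (E j / Q (j + 1)) := by
    intro j h1j h2j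
    have hxj := hx j h1j h2j
    have hexp : Real.exp (x (j + 1)) = Real.exp (x j) * (p j * E j / (p (j + 1) * Q (j + 1))) := by
      rw [← hxj, ← Real.exp_add]; ring_nf
    rw [hexp]
    have hpj1 : 0 < p (j + 1) := hp (j + 1) (by omega) (by omega)
    have hQj1 : 0 < Q (j + 1) := hQ (j + 1) (by omega) (by omega)
    field_simp
  -- invertibility of R
  have htri : (bidiagR N Q E).BlockTriangular id := by
    intro i j hij
    simp only [id] at hij
    have h1 : i.1 ≠ j.1 := by omega
    have h2 : j.1 ≠ i.1 + 1 := by omega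
    simp [bidiagR, h1, h2]
  have hdet : IsUnit (bidiagR N Q E).det := by
    rw [Matrix.det_of_upperTriangular htri]
    refine isUnit_iff_ne_zero.mpr (ne_of_gt (Finset.prod_pos ?_))
    intro i _
    have : (bidiagR N Q E) i i = Real.sqrt (Q (i.1 + 1)) := by simp [bidiagR]
    rw [this]
    exact Real.sqrt_pos.mpr (hQ (i.1 + 1) (by omega) (by omega))
  -- key identity
  have hTR : Tmat N δ Q Qb x * bidiagR N Q E = bidiagR N Qb Eb := by
    ext i j
    rw [Matrix.mul_apply, sum_mul_bidiag]
    rcases lt_trichotomy j i with hji | hij | hij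
    · -- j < i : both terms vanish, RHS = 0
      have hji' : j.1 < i.1 := hji
      have hT1 : Tmat N δ Q Qb x i j = 0 := by
        simp only [Tmat, Matrix.of_apply]
        rw [if_neg (by omega), if_neg (by omega)]
      have hT2 : ∀ h : 0 < j.1, Tmat N δ Q Qb x i ⟨j.1 - 1, lt_of_le_of_lt (Nat.pred_le _) j.2⟩ = 0 := by
        intro h
        simp only [Tmat, Matrix.of_apply]
        rw [if_neg (by omega), if_neg (by omega)]
      have hR : bidiagR N Qb Eb i j = 0 := by
        simp only [bidiagR, Matrix.of_apply]
        rw [if_neg (by omega), if_neg (by omega)]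
      rw [hT1, hR]
      by_cases h : 0 < j.1
      · rw [if_pos h, hT2 h]; ring
      · rw [if_neg h]; ring
    · -- diagonal
      subst hij
      have h1a : 1 ≤ j.1 + 1 := by omega
      have h2a : j.1 + 1 ≤ N := j.2
      have hTd : Tmat N δ Q Qb x j j = Real.sqrt (1 + δ * p (j.1 + 1)) := by
        simp only [Tmat, Matrix.of_apply, if_true, ← hpdef]
      have hT2 : ∀ h : 0 < j.1,
          Tmat N δ Q Qb x j ⟨j.1 - 1, lt_of_le_of_lt (Nat.pred_le _) j.2⟩ = 0 := by
        intro h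
        simp only [Tmat, Matrix.of_apply]
        rw [if_neg (by omega), if_neg (by omega)]
      have hRd : bidiagR N Qb Eb j j = Real.sqrt (Qb (j.1 + 1)) := by
        simp only [bidiagR, Matrix.of_apply, if_true]
      rw [hTd, hRd, hQbQ _ h1a h2a,
        Real.sqrt_mul (hQ _ h1a h2a).le, mul_comm]
      by_cases h : 0 < j.1
      · rw [if_pos h, hT2 h]; ring
      · rw [if_neg h]; ring
    · -- i < j
      have hij' : i.1 < j.1 := hij
      have h0j : 0 < j.1 := by omega
      rw [if_pos h0j]
      have h1a : 1 ≤ i.1 + 1 := by omega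
      have h2a : i.1 + 1 ≤ N := i.2
      have hOa : 0 < 1 + δ * p (i.1 + 1) := hop _ h1a h2a
      have hsOpos : 0 < Real.sqrt (1 + δ * p (i.1 + 1)) := Real.sqrt_pos.mpr hOa
      have hsO : Real.sqrt (1 + δ * p (i.1 + 1)) * Real.sqrt (1 + δ * p (i.1 + 1))
          = 1 + δ * p (i.1 + 1) := Real.mul_self_sqrt hOa.le
      have hra : 0 < p (i.1 + 1) * Real.exp (x (i.1 + 1)) :=
        mul_pos (hp _ h1a h2a) (Real.exp_pos _)
      have hTij : Tmat N δ Q Qb x i j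
          = δ * p (i.1 + 1) / Real.sqrt (1 + δ * p (i.1 + 1)) *
            Real.sqrt (p (j.1 + 1) * Real.exp (x (j.1 + 1)) /
              (p (i.1 + 1) * Real.exp (x (i.1 + 1)))) := by
        simp only [Tmat, Matrix.of_apply]
        rw [if_neg (by omega), if_pos (by omega), hpdef]
      rw [hTij]
      by_cases hc : j.1 = i.1 + 1
      · -- superdiagonal
        have hjm : (⟨j.1 - 1, lt_of_le_of_lt (Nat.pred_le _) j.2⟩ : Fin N) = i :=
          Fin.ext (by simp only; omega)
        rw [hjm]
        have hTd : Tmat N δ Q Qb x i i = Real.sqrt (1 + δ * p (i.1 + 1)) := by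
          simp only [Tmat, Matrix.of_apply, if_true, ← hpdef]
        rw [hTd]
        have hRij : bidiagR N Qb Eb i j = -Real.sqrt (Eb (i.1 + 1)) := by
          simp only [bidiagR, Matrix.of_apply]
          rw [if_neg (by omega), if_pos (by omega)]
        rw [hRij]
        have h1e : 1 ≤ i.1 + 1 := by omega
        have h2e : i.1 + 1 ≤ N - 1 := by omega
        have hEa : 0 < E (i.1 + 1) := hE _ h1e h2e
        have hQb1 : 0 < Q (j.1 + 1) := hQ _ (by omega) (by omega)
        have hratio : p (i.1 + 1 + 1) * Real.exp (x (i.1 + 1 + 1)) /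
            (p (i.1 + 1) * Real.exp (x (i.1 + 1))) = E (i.1 + 1) / Q (i.1 + 1 + 1) := by
          rw [hr _ h1e h2e]
          exact mul_div_cancel_left₀ _ hra.ne'
        rw [hc]
        rw [hratio]
        have hQb1' : 0 < Q (i.1 + 1 + 1) := hc ▸ hQb1
        have hQs : 0 < Real.sqrt (Q (i.1 + 1 + 1)) := Real.sqrt_pos.mpr hQb1'
        have hEbval : Eb (i.1 + 1) = E (i.1 + 1) / (1 + δ * p (i.1 + 1)) := by
          have hh2 := h2 _ h1e h2e
          rw [hQbQ _ h1a h2a] at hh2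
          have hQa : 0 < Q (i.1 + 1) := hQ _ h1a h2a
          rw [mul_assoc] at hh2
          have h3 := mul_left_cancel₀ hQa.ne' hh2
          rw [eq_div_iff hOa.ne', mul_comm]
          exact h3
        rw [hEbval, Real.sqrt_div hEa.le, mul_assoc, div_mul_cancel₀ _ hQs.ne',
          Real.sqrt_div hEa.le]
        field_simp
        linear_combination (-1) * hsO
      · -- strictly above superdiagonal
        have h1m : 1 ≤ j.1 := by omega
        have h2m : j.1 ≤ N - 1 := by omega
        have hT2 : Tmat N δ Q Qb x i ⟨j.1 - 1, lt_of_le_of_lt (Nat.pred_le _) j.2⟩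
            = δ * p (i.1 + 1) / Real.sqrt (1 + δ * p (i.1 + 1)) *
              Real.sqrt (p j.1 * Real.exp (x j.1) /
                (p (i.1 + 1) * Real.exp (x (i.1 + 1)))) := by
          have hidx : j.1 - 1 + 1 = j.1 := by omega
          simp only [Tmat, Matrix.of_apply, Fin.val_mk]
          rw [if_neg (by omega), if_pos (by omega), hidx, hpdef]
        rw [hT2]
        have hRij : bidiagR N Qb Eb i j = 0 := by
          simp only [bidiagR, Matrix.of_apply]
          rw [if_neg (by omega), if_neg (by omega)]
        rw [hRij]
        have hQb1 : 0 < Q (j.1 + 1) := hQ _ (by omega) (by omega)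
        have hrm : 0 < p j.1 * Real.exp (x j.1) :=
          mul_pos (hp _ h1m (by omega)) (Real.exp_pos _)
        have hEm : 0 < E j.1 := hE _ h1m h2m
        have hrj : 0 < p (j.1 + 1) * Real.exp (x (j.1 + 1)) :=
          mul_pos (hp _ (by omega) (by omega)) (Real.exp_pos _)
        have key : Real.sqrt (p (j.1 + 1) * Real.exp (x (j.1 + 1)) /
              (p (i.1 + 1) * Real.exp (x (i.1 + 1)))) * Real.sqrt (Q (j.1 + 1))
            = Real.sqrt (p j.1 * Real.exp (x j.1) /
              (p (i.1 + 1) * Real.exp (x (i.1 + 1)))) * Real.sqrt (E j.1) := by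
          rw [← Real.sqrt_mul (div_nonneg hrj.le hra.le),
            ← Real.sqrt_mul (div_nonneg hrm.le hra.le)]
          congr 1
          rw [hr _ h1m h2m]
          field_simp
        linear_combination (δ * p (i.1 + 1) / Real.sqrt (1 + δ * p (i.1 + 1))) * key
  -- conclude
  have hmain : bidiagR N Qb Eb * (bidiagR N Q E)⁻¹ = Tmat N δ Q Qb x := by
    rw [← hTR, Matrix.mul_assoc, Matrix.mul_nonsing_inv _ hdet, Matrix.mul_one]
  rw [hmain]
  refine ⟨?_, ?_, ?_⟩
  · intro i j hji
    have : j.1 < i.1 := hji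
    simp only [Tmat, Matrix.of_apply]
    rw [if_neg (by omega), if_neg (by omega)]
  · intro i
    simp [Tmat, hpdef]
  · intro i j hij
    have : i.1 < j.1 := hij
    simp only [Tmat, Matrix.of_apply]
    rw [if_neg (by omega), if_pos this]
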